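/- Let 𝔽 be ℝ or ℂ, X a Banach space over 𝔽 with dim X ≥ 2, and 𝒜 a standard operator algebra in B(X). If Φ : 𝒜 → 𝒜 is a surjective strong 3-commutativity preserving map, then for any A, B ∈ 𝒜 there exists a scalar λ_{A,B} ∈ 𝔽 such that Φ(A + B) = Φ(A) + Φ(B) + λ_{A,B}·I. -/

import Mathlib

set_option synthInstance.maxHeartbeats 400000
set_option maxHeartbeats 1000000

/-- The commutator `[A,B] = AB - BA` in a ring. -/
def bracket1 {R : Type*} [Ring R] (A B : R) : R := A * B - B * A

/-- The 3-commutator `[A,B]₃ = [[[A,B],B],B]` in a ring. -/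
def bracket3 {R : Type*} [Ring R] (A B : R) : R := bracket1 (bracket1 (bracket1 A B) B) B

/-- A standard operator algebra on a normed space `X` over `𝕜` is a subalgebra of
`B(X)` (automatically containing the identity) containing all finite-rank operators. -/
def IsStandardOperatorAlgebra (𝕜 : Type*) [RCLike 𝕜] (X : Type*)
    [NormedAddCommGroup X] [NormedSpace 𝕜 X]
    (𝒜 : Subalgebra 𝕜 (X →L[𝕜] X)) : Prop :=
  ∀ T : X →L[𝕜] X, FiniteDimensional 𝕜 (LinearMap.range (T : X →ₗ[𝕜] X)) → T ∈ 𝒜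

/-- `bracket3` is additive (indeed linear) in its first argument. -/
lemma bracket3_sub_left {R : Type*} [Ring R] (A A' B : R) :
    bracket3 (A - A') B = bracket3 A B - bracket3 A' B := by
  simp only [bracket3, bracket1]
  noncomm_ring

/-- For an idempotent `P`, the 3-commutator collapses to the plain commutator. -/
lemma bracket3_idem {R : Type*} [Ring R] (D P : R) (hP : P * P = P) :
    bracket3 D P = D * P - P * D := by
  have hP3 : ∀ y : R, P * (P * y) = P * y := fun y => by rw [← mul_assoc, hP]
  simp only [bracket3, bracket1, sub_mul, mul_sub, mul_assoc, hP, hP3]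
  abel

/-- A linear operator for which every vector is an eigenvector is a scalar. -/
lemma eq_smul_of_forall_eigen {𝕜 X : Type*} [Field 𝕜] [AddCommGroup X] [Module 𝕜 X]
    (D : X →ₗ[𝕜] X) (x₀ : X) (hx₀ : x₀ ≠ 0)
    (h : ∀ x : X, x ≠ 0 → ∃ c : 𝕜, D x = c • x) :
    ∃ l : 𝕜, ∀ x : X, D x = l • x := by
  obtain ⟨l, hl⟩ := h x₀ hx₀
  refine ⟨l, fun x => ?_⟩
  by_cases hx : x = 0
  · simp [hx]
  obtain ⟨c, hc⟩ := h x hx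
  by_cases hdep : ∃ a : 𝕜, x = a • x₀
  · obtain ⟨a, rfl⟩ := hdep
    rw [map_smul, hl, smul_comm]
  · have hsum : x + x₀ ≠ 0 := by
      intro hcon
      exact hdep ⟨-1, by rw [neg_smul, one_smul, eq_neg_iff_add_eq_zero]; exact hcon⟩
    obtain ⟨c', hc'⟩ := h (x + x₀) hsum
    rw [map_add, hc, hl, smul_add] at hc'
    have key : (c - c') • x = (c' - l) • x₀ := by
      rw [sub_smul, sub_smul, sub_eq_sub_iff_add_eq_add, hc']
      abel
    have hcc' : c = c' := by
      by_contra hne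
      apply hdep
      refine ⟨(c - c')⁻¹ * (c' - l), ?_⟩
      rw [mul_smul, ← key, ← mul_smul, inv_mul_cancel₀ (sub_ne_zero.mpr hne), one_smul]
    have hzero : (c' - l) • x₀ = 0 := by rw [← key, hcc', sub_self, zero_smul]
    have hcl : c' = l := sub_eq_zero.mp ((smul_eq_zero.mp hzero).resolve_right hx₀)
    rw [hc, hcc', hcl]

theorem stmt_8 {𝕜 X : Type*} [RCLike 𝕜] [NormedAddCommGroup X] [NormedSpace 𝕜 X]
    [CompleteSpace X] (hdim : 2 ≤ Module.rank 𝕜 X)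
    (𝒜 : Subalgebra 𝕜 (X →L[𝕜] X)) (h𝒜 : IsStandardOperatorAlgebra 𝕜 X 𝒜)
    (Φ : 𝒜 → 𝒜) (hsurj : Function.Surjective Φ)
    (hpres : ∀ A B : 𝒜, bracket3 (Φ A) (Φ B) = bracket3 A B) :
    ∀ A B : 𝒜, ∃ l : 𝕜, Φ (A + B) = Φ A + Φ B + l • (1 : 𝒜) := by
  have hnt : Nontrivial X := by
    rw [← rank_pos_iff_nontrivial (R := 𝕜)]
    exact lt_of_lt_of_le (by norm_num) hdim
  intro A B
  set D : 𝒜 := Φ (A + B) - Φ A - Φ B with hD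
  -- Step 1: D 3-commutes with everything in 𝒜
  have hDcomm : ∀ C : 𝒜, bracket3 D C = 0 := by
    intro C
    obtain ⟨T, rfl⟩ := hsurj C
    rw [hD, bracket3_sub_left, bracket3_sub_left, hpres, hpres, hpres]
    rw [show bracket3 (A + B) T = bracket3 A T + bracket3 B T by
      have := bracket3_sub_left (A + B) B T
      simp only [add_sub_cancel_right] at this
      rw [this]; abel]
    abel
  -- Step 2: D commutes with every idempotent in 𝒜
  have hDidem : ∀ P : X →L[𝕜] X, P ∈ 𝒜 → P * P = P →
      (D : X →L[𝕜] X) * P = P * (D : X →L[𝕜] X) := by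
    intro P hPmem hPidem
    have h0 := hDcomm ⟨P, hPmem⟩
    have hidem' : (⟨P, hPmem⟩ : 𝒜) * ⟨P, hPmem⟩ = ⟨P, hPmem⟩ := Subtype.ext hPidem
    rw [bracket3_idem _ _ hidem'] at h0
    have := congrArg (Subtype.val) h0
    push_cast at this
    rw [sub_eq_zero] at this
    exact this
  -- Step 3: every nonzero vector is an eigenvector of D
  have heigen : ∀ x : X, x ≠ 0 → ∃ c : 𝕜, (D : X →L[𝕜] X) x = c • x := by
    intro x hx
    obtain ⟨g, -, hg⟩ := exists_dual_vector 𝕜 x (norm_ne_zero_iff.mpr hx)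
    set f : X →L[𝕜] 𝕜 := (‖x‖ : 𝕜)⁻¹ • g with hf
    have hfx : f x = 1 := by
      rw [hf]
      simp only [ContinuousLinearMap.smul_apply, hg, smul_eq_mul]
      rw [inv_mul_cancel₀]
      exact_mod_cast norm_ne_zero_iff.mpr hx
    set P : X →L[𝕜] X := f.smulRight x with hP
    have hPapp : ∀ y, P y = f y • x := fun y => rfl
    have hPidem : P * P = P := by
      ext y
      simp only [ContinuousLinearMap.mul_apply, hPapp, map_smul, smul_eq_mul, hfx,
        mul_one]
    have hPmem : P ∈ 𝒜 := by
      apply h𝒜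
      have hle : LinearMap.range (P : X →ₗ[𝕜] X) ≤ 𝕜 ∙ x := by
        rintro y ⟨z, rfl⟩
        exact Submodule.mem_span_singleton.mpr ⟨f z, (hPapp z).symm⟩
      exact Submodule.finiteDimensional_of_le hle
    have hmul := hDidem P hPmem hPidem
    have happ : (D : X →L[𝕜] X) (P x) = P ((D : X →L[𝕜] X) x) := by
      rw [← ContinuousLinearMap.mul_apply, hmul, ContinuousLinearMap.mul_apply]
    rw [hPapp, hfx, one_smul, hPapp] at happ
    exact ⟨f ((D : X →L[𝕜] X) x), happ⟩
  -- Step 4: D is a scalar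
  obtain ⟨x₀, hx₀⟩ := exists_ne (0 : X)
  obtain ⟨l, hl⟩ := eq_smul_of_forall_eigen ((D : X →L[𝕜] X) : X →ₗ[𝕜] X) x₀ hx₀
    (fun x hx => heigen x hx)
  refine ⟨l, ?_⟩
  have hDval : (D : X →L[𝕜] X) = l • (1 : X →L[𝕜] X) := by
    ext y
    simpa using hl y
  have : D = l • (1 : 𝒜) := by
    apply Subtype.ext
    rw [hDval]
    simp
  rw [hD] at this
  rw [sub_sub, sub_eq_iff_eq_add] at this
  rw [this]
  abel
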